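/- Let c ≥ 2 be an integer and (a_n) as above. For n ≥ 3 and integers t_0, …, t_{n−2} with 0 ≤ t_i ≤ a_{i+1} − c·s_i for 0 ≤ i ≤ n−2 (where s_i = Σ_{j=0}^{i−1} a_{i−j+1}·t_j), one has s_{n−1}·a_{n−2} − s_{n−2}·a_{n−1} = Σ_{i=2}^{n−2} t_i·a_i ≥ 0. -/

import Mathlib

theorem stmt_14 (c : ℤ) (hc : 2 ≤ c) (a : ℕ → ℤ) (ha1 : a 1 = 0) (ha2 : a 2 = 1)
    (harec : ∀ m : ℕ, 3 ≤ m → a m = c * a (m - 1) - a (m - 2))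
    (n : ℕ) (hn : 3 ≤ n) (t : ℕ → ℤ) (s : ℕ → ℤ)
    (hs : ∀ i : ℕ, s i = ∑ j ∈ Finset.range i, a (i - j + 1) * t j)
    (ht : ∀ i : ℕ, i ≤ n - 2 → 0 ≤ t i ∧ t i ≤ a (i + 1) - c * s i) :
    s (n - 1) * a (n - 2) - s (n - 2) * a (n - 1) = ∑ i ∈ Finset.Icc 2 (n - 2), t i * a i ∧
      0 ≤ s (n - 1) * a (n - 2) - s (n - 2) * a (n - 1) := by
  obtain ⟨k, rfl⟩ : ∃ k, n = k + 3 := ⟨n - 3, by omega⟩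
  -- monotonicity / nonnegativity of a
  have hmono : ∀ m : ℕ, 1 ≤ m → 0 ≤ a m ∧ a m ≤ a (m + 1) := by
    intro m hm
    induction m, hm using Nat.le_induction with
    | base => simp [ha1, ha2]
    | succ m hm ih =>
      have h1 : a (m + 2) = c * a (m + 1) - a m := by
        have := harec (m + 2) (by omega)
        simpa using this
      refine ⟨by linarith [ih.1, ih.2], ?_⟩
      rw [h1]
      nlinarith [ih.1, ih.2]
  -- key identity
  have key : ∀ d x : ℕ, 1 ≤ x → a (x + 1) * a (x + d) - a x * a (x + d + 1) = a (d + 1) := by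
    intro d x hx
    induction x, hx using Nat.le_induction with
    | base =>
      rw [ha1, ha2, Nat.add_comm 1 d]
      ring
    | succ x hx ih =>
      have h1 : a (x + 2) = c * a (x + 1) - a x := by
        have := harec (x + 2) (by omega); simpa using this
      have h2 : a (x + d + 2) = c * a (x + d + 1) - a (x + d) := by
        have := harec (x + d + 2) (by omega); simpa using this
      show a (x + 2) * a (x + 1 + d) - a (x + 1) * a (x + 1 + d + 1) = a (d + 1)
      have e1 : x + 1 + d = x + d + 1 := by omega
      rw [e1, show x + d + 1 + 1 = x + d + 2 by omega, h1, h2]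
      linear_combination ih
  have hs0 : s 0 = 0 := by simp [hs 0]
  have ht0 : t 0 = 0 := by
    have h := ht 0 (by omega)
    rw [hs0] at h
    have : a (0 + 1) = 0 := ha1
    rw [this] at h
    linarith [h.1, h.2]
  have hS : s (k + 2) * a (k + 1) - s (k + 1) * a (k + 2)
      = ∑ j ∈ Finset.range (k + 2), t j * a j := by
    rw [hs, hs, Finset.sum_mul, Finset.sum_mul]
    have hext : (∑ j ∈ Finset.range (k + 2), a (k + 1 - j + 1) * t j * a (k + 2))
        = ∑ j ∈ Finset.range (k + 1), a (k + 1 - j + 1) * t j * a (k + 2) := by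
      rw [Finset.sum_range_succ]
      have e : k + 1 - (k + 1) + 1 = 1 := by omega
      rw [e, ha1]
      ring
    rw [← hext, ← Finset.sum_sub_distrib]
    apply Finset.sum_congr rfl
    intro j hj
    simp only [Finset.mem_range] at hj
    rcases Nat.eq_zero_or_pos j with h0 | h1
    · subst h0; simp [ht0]
    · have hx : 1 ≤ k + 2 - j := by omega
      have hk := key (j - 1) (k + 2 - j) hx
      have e1 : k + 2 - j + (j - 1) = k + 1 := by omega
      have e3 : j - 1 + 1 = j := by omega
      have e4 : k + 2 - j + 1 = k + 3 - j := by omega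
      have e5 : k + 1 - j + 1 = k + 2 - j := by omega
      rw [e1, show k + 1 + 1 = k + 2 by omega, e3, e4] at hk
      have e6 : k + 2 - j + 1 = k + 3 - j := by omega
      rw [e5, e6]
      linear_combination t j * hk
  have hsplit : (∑ j ∈ Finset.range (k + 2), t j * a j)
      = ∑ i ∈ Finset.Icc 2 (k + 1), t i * a i := by
    rw [Finset.range_eq_Ico,
      ← Finset.sum_Ico_consecutive _ (by omega : 0 ≤ 2) (by omega : 2 ≤ k + 2)]
    have h01 : (∑ j ∈ Finset.Ico 0 2, t j * a j) = 0 := by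
      rw [show Finset.Ico 0 2 = {0, 1} from rfl]
      simp [ht0, ha1]
    rw [h01, zero_add, ← Finset.Ico_add_one_right_eq_Icc (a := 2) (b := k + 1)]; rfl
  have goal1 : s (k + 3 - 1) * a (k + 3 - 2) - s (k + 3 - 2) * a (k + 3 - 1)
      = ∑ i ∈ Finset.Icc 2 (k + 3 - 2), t i * a i := by
    show s (k + 2) * a (k + 1) - s (k + 1) * a (k + 2) = ∑ i ∈ Finset.Icc 2 (k + 1), t i * a i
    rw [hS, hsplit]
  refine ⟨goal1, ?_⟩
  rw [show s (k + 3 - 1) * a (k + 3 - 2) - s (k + 3 - 2) * a (k + 3 - 1)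
      = s (k + 2) * a (k + 1) - s (k + 1) * a (k + 2) from rfl, hS]
  apply Finset.sum_nonneg
  intro j hj
  simp only [Finset.mem_range] at hj
  rcases Nat.eq_zero_or_pos j with h0 | h1
  · subst h0; simp [ht0]
  · exact mul_nonneg (ht j (by omega)).1 (hmono j h1).1
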